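/- Let G be a graph in which two complete graphs K_p and K_q (p, q ≥ 3) are glued along a single common vertex. Then nac(G) = 1; that is, G has exactly two NAC-colourings, obtained from each other by swapping colours: one copy entirely red and the other entirely blue. -/

import Mathlib

open scoped Classical

namespace NAC

variable {V : Type*}

/-- Number of edges of `G` in the list `l` whose colour under `c` is `b`. -/
noncomputable def cCount (G : SimpleGraph V) (c : G.edgeSet → Bool) (b : Bool)
    (l : List (Sym2 V)) : ℕ :=
  (l.filter fun e => decide (∃ h : e ∈ G.edgeSet, c ⟨e, h⟩ = b)).length

/-- `c` is a NAC-colouring of `G`: it is surjective (both colours are used) and no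
cycle of `G` contains exactly one edge of either colour. -/
def IsNAC (G : SimpleGraph V) (c : G.edgeSet → Bool) : Prop :=
  Function.Surjective c ∧
  ∀ ⦃u : V⦄ (w : G.Walk u u), w.IsCycle →
    cCount G c true w.edges ≠ 1 ∧ cCount G c false w.edges ≠ 1

/-- The number of NAC-colourings of `G`, divided by two. -/
noncomputable def nacNum (G : SimpleGraph V) : ℕ :=
  {c : G.edgeSet → Bool | IsNAC G c}.ncard / 2

end NAC

namespace NAC

/-- Two complete graphs, on the vertex sets `{none} ∪ inl's` (of size `p + 1`) and
`{none} ∪ inr's` (of size `q + 1`), glued along the single common vertex `none`. -/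
def twoCliques (p q : ℕ) : SimpleGraph (Option (Fin p ⊕ Fin q)) where
  Adj x y :=
    match x, y with
    | none, none => False
    | none, some _ => True
    | some _, none => True
    | some (.inl i), some (.inl j) => i ≠ j
    | some (.inr i), some (.inr j) => i ≠ j
    | some (.inl _), some (.inr _) => False
    | some (.inr _), some (.inl _) => False
  symm := by
    refine ⟨?_⟩
    rintro (_ | (i | i)) (_ | (j | j)) h <;>
      first | trivial | exact Ne.symm h | exact h.elim
  loopless := by
    refine ⟨?_⟩
    rintro (_ | (i | i)) h <;> first | exact h | exact h rfl

/-- Whether an edge of `twoCliques` lies in the first clique. -/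
noncomputable def inFirstClique (p q : ℕ) : Sym2 (Option (Fin p ⊕ Fin q)) → Bool :=
  fun e => decide (∃ i : Fin p, (some (Sum.inl i) : Option (Fin p ⊕ Fin q)) ∈ e)

end NAC

namespace NAC

section Aux

variable {V : Type*}

lemma cCount_nil (G : SimpleGraph V) (c : G.edgeSet → Bool) (b : Bool) :
    cCount G c b [] = 0 := rfl

lemma cCount_cons (G : SimpleGraph V) (c : G.edgeSet → Bool) (b : Bool)
    {e : Sym2 V} (l : List (Sym2 V)) (he : e ∈ G.edgeSet) :
    cCount G c b (e :: l) = (if c ⟨e, he⟩ = b then 1 else 0) + cCount G c b l := by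
  unfold cCount
  rw [List.filter_cons]
  by_cases h : c ⟨e, he⟩ = b
  · have : decide (∃ h : e ∈ G.edgeSet, c ⟨e, h⟩ = b) = true := by
      simp only [decide_eq_true_iff]; exact ⟨he, h⟩
    simp [this, h, he, Nat.add_comm]
  · have : decide (∃ h : e ∈ G.edgeSet, c ⟨e, h⟩ = b) = false := by
      simp only [decide_eq_false_iff_not]
      rintro ⟨h1, h2⟩; exact h h2
    simp [this, h, he, Nat.add_comm]

lemma cCount_perm (G : SimpleGraph V) (c : G.edgeSet → Bool) (b : Bool)
    {l l' : List (Sym2 V)} (h : List.Perm l l') : cCount G c b l = cCount G c b l' :=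
  (h.filter _).length_eq

lemma cCount_const (G : SimpleGraph V) (c : G.edgeSet → Bool) (b β : Bool)
    {l : List (Sym2 V)} (hl : ∀ e ∈ l, ∃ he : e ∈ G.edgeSet, c ⟨e, he⟩ = β) :
    cCount G c b l = if β = b then l.length else 0 := by
  induction l with
  | nil => simp [cCount_nil]
  | cons e t ih =>
    obtain ⟨he, hce⟩ := hl e (by simp)
    rw [cCount_cons G c b t he, ih (fun x hx => hl x (by simp [hx])), hce]
    by_cases h : β = b <;> simp [h] <;> omega

lemma c_congr (G : SimpleGraph V) (c : G.edgeSet → Bool) {e f : Sym2 V}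
    (h : e = f) (he : e ∈ G.edgeSet) (hf : f ∈ G.edgeSet) :
    c ⟨e, he⟩ = c ⟨f, hf⟩ := by subst h; rfl

/-- In a triangle, all three edges get the same colour under a NAC-colouring. -/
lemma triangle_mono (G : SimpleGraph V) (c : G.edgeSet → Bool)
    (hc : IsNAC G c) {a b d : V} (hab : G.Adj a b) (hbd : G.Adj b d) (hda : G.Adj d a) :
    c ⟨s(a, b), G.mem_edgeSet.mpr hab⟩ = c ⟨s(b, d), G.mem_edgeSet.mpr hbd⟩ ∧
    c ⟨s(b, d), G.mem_edgeSet.mpr hbd⟩ = c ⟨s(d, a), G.mem_edgeSet.mpr hda⟩ := by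
  have hne1 : a ≠ b := hab.ne
  have hne2 : b ≠ d := hbd.ne
  have hne3 : d ≠ a := hda.ne
  set w : G.Walk a a := .cons hab (.cons hbd (.cons hda .nil)) with hw
  have hcyc : w.IsCycle := by
    rw [SimpleGraph.Walk.isCycle_def, SimpleGraph.Walk.isTrail_def]
    refine ⟨?_, by simp [hw], ?_⟩
    · simp only [hw, SimpleGraph.Walk.edges_cons, SimpleGraph.Walk.edges_nil,
        List.nodup_cons, List.mem_cons, List.mem_singleton, List.not_mem_nil,
        Sym2.eq_iff, List.nodup_nil]
      tauto
    · simp only [hw, SimpleGraph.Walk.support_cons, SimpleGraph.Walk.support_nil,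
        List.tail_cons, List.nodup_cons, List.mem_cons, List.mem_singleton,
        List.not_mem_nil, List.nodup_nil]
      tauto
  obtain ⟨h1, h0⟩ := hc.2 w hcyc
  have hed : w.edges = [s(a, b), s(b, d), s(d, a)] := rfl
  rw [hed, cCount_cons _ _ _ _ (G.mem_edgeSet.mpr hab),
    cCount_cons _ _ _ _ (G.mem_edgeSet.mpr hbd),
    cCount_cons _ _ _ _ (G.mem_edgeSet.mpr hda), cCount_nil] at h1 h0
  cases hx : c ⟨s(a, b), G.mem_edgeSet.mpr hab⟩ <;>
    cases hy : c ⟨s(b, d), G.mem_edgeSet.mpr hbd⟩ <;>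
    cases hz : c ⟨s(d, a), G.mem_edgeSet.mpr hda⟩ <;>
    simp [hx, hy, hz] at h1 h0 ⊢

end Aux

section TwoCliques

variable {p q : ℕ}

lemma side_none_some (x : Fin p ⊕ Fin q) :
    inFirstClique p q s(none, some x) = x.isLeft := by
  rcases x with i | i <;> simp [inFirstClique, Sym2.mem_iff]

lemma side_some_some (x y : Fin p ⊕ Fin q) :
    inFirstClique p q s(some x, some y) = (x.isLeft || y.isLeft) := by
  rcases x with i | i <;> rcases y with j | j <;> simp [inFirstClique, Sym2.mem_iff]

/-- In a walk starting at `some x` where `none` occurs at most as the final vertex,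
every edge has side `x.isLeft`. -/
lemma walk_side : ∀ {a b : Option (Fin p ⊕ Fin q)} (w : (twoCliques p q).Walk a b)
    (x : Fin p ⊕ Fin q), a = some x → none ∉ w.support.dropLast →
    ∀ e ∈ w.edges, inFirstClique p q e = x.isLeft := by
  intro a b w
  induction w with
  | nil => intro x ha hd e he; simp at he
  | @cons a v b hadj t ih =>
    intro x ha hd e he
    subst ha
    rw [SimpleGraph.Walk.support_cons,
      List.dropLast_cons_of_ne_nil (SimpleGraph.Walk.support_ne_nil t)] at hd
    simp only [List.mem_cons] at hd
    push_neg at hd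
    obtain ⟨-, hd⟩ := hd
    rw [SimpleGraph.Walk.edges_cons, List.mem_cons] at he
    rcases v with _ | y
    · -- next vertex is none: then t must be nil
      cases t with
      | nil =>
        rcases he with rfl | he
        · rw [show (s(some x, (none : Option (Fin p ⊕ Fin q)))) = s(none, some x) from
            Sym2.eq_swap]
          exact side_none_some x
        · simp at he
      | cons h' t' =>
        exfalso
        apply hd
        rw [SimpleGraph.Walk.support_cons,
          List.dropLast_cons_of_ne_nil (SimpleGraph.Walk.support_ne_nil t')]
        simp
    · -- next vertex is some y
      have hside : y.isLeft = x.isLeft := by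
        rcases x with i | i <;> rcases y with j | j <;> first | rfl | exact hadj.elim
      rcases he with rfl | he
      · rw [side_some_some x y, hside]
        exact Bool.or_self _
      · rw [ih y rfl hd e he, hside]

open SimpleGraph in
/-- Every cycle in `twoCliques` is monochromatic in sides. -/
lemma cycle_side {u : Option (Fin p ⊕ Fin q)} (w : (twoCliques p q).Walk u u)
    (hw : w.IsCycle) : ∃ β : Bool, ∀ e ∈ w.edges, inFirstClique p q e = β := by
  rcases Classical.em ((none : Option (Fin p ⊕ Fin q)) ∈ w.support) with hn | hn
  · -- rotate the cycle to start at `none`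
    set w' := w.rotate _ hn with hw'
    have hperm : List.Perm w'.edges w.edges := (w.rotate_edges _ hn).perm
    have hcyc : w'.IsCycle := hw.rotate hn
    cases hmatch : w' with
    | nil => exact absurd (hw'.symm ▸ hmatch) hcyc.ne_nil
    | @cons _ v _ hadj t =>
      rcases v with _ | x
      · exact hadj.elim
      · have hnodup : t.support.Nodup := by
          have := hcyc.support_nodup
          rwa [hmatch, Walk.support_cons, List.tail_cons] at this
        have hlast : t.support.getLast (Walk.support_ne_nil t) = none :=
          Walk.getLast_support t
        have hnd : none ∉ t.support.dropLast := by
          intro hmem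
          have hsplit := List.dropLast_append_getLast (Walk.support_ne_nil t)
          rw [← hsplit] at hnodup
          rw [List.nodup_append] at hnodup
          exact hnodup.2.2 _ hmem _ (by simp [hlast]) rfl
        refine ⟨x.isLeft, fun e he => ?_⟩
        rw [← hperm.mem_iff] at he
        rw [hmatch, Walk.edges_cons, List.mem_cons] at he
        rcases he with rfl | he
        · exact side_none_some x
        · exact walk_side t x rfl hnd e he
  · -- none not on the cycle at all
    obtain ⟨x, hu⟩ : ∃ x, u = some x := by
      cases u with
      | none => exact absurd w.start_mem_support hn
      | some x => exact ⟨x, rfl⟩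
    refine ⟨x.isLeft, fun e he => walk_side w x hu ?_ e he⟩
    intro hmem
    exact hn (List.dropLast_subset _ hmem)


open SimpleGraph in
lemma isNAC_of_side (hp : 0 < p) (hq : 0 < q) (c : (twoCliques p q).edgeSet → Bool) (t : Bool)
    (hcc : ∀ (e : Sym2 (Option (Fin p ⊕ Fin q))) (he : e ∈ (twoCliques p q).edgeSet),
      c ⟨e, he⟩ = (if inFirstClique p q e then t else !t)) :
    IsNAC (twoCliques p q) c := by
  have mL : (s(none, some (Sum.inl ⟨0, hp⟩)) : Sym2 (Option (Fin p ⊕ Fin q))) ∈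
      (twoCliques p q).edgeSet := (twoCliques p q).mem_edgeSet.mpr trivial
  have mR : (s(none, some (Sum.inr ⟨0, hq⟩)) : Sym2 (Option (Fin p ⊕ Fin q))) ∈
      (twoCliques p q).edgeSet := (twoCliques p q).mem_edgeSet.mpr trivial
  constructor
  · intro b
    by_cases hb : b = t
    · refine ⟨⟨_, mL⟩, ?_⟩
      rw [hcc _ mL, side_none_some]
      simp [hb]
    · have hb' : b = !t := by cases b <;> cases t <;> simp_all
      refine ⟨⟨_, mR⟩, ?_⟩
      rw [hcc _ mR, side_none_some]
      simp [hb']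
  · intro u w hw
    obtain ⟨β, hβ⟩ := cycle_side w hw
    have key : ∀ e ∈ w.edges, ∃ he : e ∈ (twoCliques p q).edgeSet,
        c ⟨e, he⟩ = (if β then t else !t) := fun e he =>
      ⟨w.edges_subset_edgeSet he, by rw [hcc, hβ e he]⟩
    have hlen : w.edges.length = w.length := w.length_edges
    have h3 : 3 ≤ w.length := hw.three_le_length
    constructor <;> rw [cCount_const _ _ _ _ key, hlen] <;> split_ifs <;> omega

open SimpleGraph in
lemma side_char (hp : 0 < p) (hq : 0 < q) (c : (twoCliques p q).edgeSet → Bool)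
    (hc : IsNAC (twoCliques p q) c) :
    ∃ t : Bool, ∀ (e : Sym2 (Option (Fin p ⊕ Fin q))) (he : e ∈ (twoCliques p q).edgeSet),
      c ⟨e, he⟩ = (if inFirstClique p q e then t else !t) := by
  set i0 : Fin p := ⟨0, hp⟩ with hi0
  set j0 : Fin q := ⟨0, hq⟩ with hj0
  set bL := c ⟨s(none, some (Sum.inl i0)), (twoCliques p q).mem_edgeSet.mpr trivial⟩ with hbL
  set bR := c ⟨s(none, some (Sum.inr j0)), (twoCliques p q).mem_edgeSet.mpr trivial⟩ with hbRdef
  have hubL : ∀ i : Fin p,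
      c ⟨s(none, some (Sum.inl i)), (twoCliques p q).mem_edgeSet.mpr trivial⟩ = bL := by
    intro i
    by_cases hi : i = i0
    · subst hi; rfl
    · have h := triangle_mono (twoCliques p q) c hc (a := none) (b := some (Sum.inl i))
        (d := some (Sum.inl i0)) trivial hi trivial
      rw [h.1, h.2]
      exact c_congr (twoCliques p q) c Sym2.eq_swap _ _
  have hubR : ∀ j : Fin q,
      c ⟨s(none, some (Sum.inr j)), (twoCliques p q).mem_edgeSet.mpr trivial⟩ = bR := by
    intro j
    by_cases hj : j = j0
    · subst hj; rfl
    · have h := triangle_mono (twoCliques p q) c hc (a := none) (b := some (Sum.inr j))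
        (d := some (Sum.inr j0)) trivial hj trivial
      rw [h.1, h.2]
      exact c_congr (twoCliques p q) c Sym2.eq_swap _ _
  have edgeL : ∀ (i j : Fin p) (hij : i ≠ j),
      c ⟨s(some (Sum.inl i), some (Sum.inl j)), (twoCliques p q).mem_edgeSet.mpr hij⟩ = bL := by
    intro i j hij
    have h := triangle_mono (twoCliques p q) c hc (a := none) (b := some (Sum.inl i))
      (d := some (Sum.inl j)) trivial hij trivial
    exact h.1.symm.trans (hubL i)
  have edgeR : ∀ (i j : Fin q) (hij : i ≠ j),
      c ⟨s(some (Sum.inr i), some (Sum.inr j)), (twoCliques p q).mem_edgeSet.mpr hij⟩ = bR := by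
    intro i j hij
    have h := triangle_mono (twoCliques p q) c hc (a := none) (b := some (Sum.inr i))
      (d := some (Sum.inr j)) trivial hij trivial
    exact h.1.symm.trans (hubR i)
  have heq : ∀ (e : Sym2 (Option (Fin p ⊕ Fin q))) (he : e ∈ (twoCliques p q).edgeSet),
      c ⟨e, he⟩ = if inFirstClique p q e then bL else bR := by
    intro e
    induction e using Sym2.ind with
    | _ u v =>
      intro he
      have hadj : (twoCliques p q).Adj u v := (twoCliques p q).mem_edgeSet.mp he
      rcases u with _ | (i | i) <;> rcases v with _ | (j | j)
      · exact hadj.elim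
      · rw [side_none_some]; simpa using hubL j
      · rw [side_none_some]; simpa using hubR j
      · rw [c_congr (twoCliques p q) c Sym2.eq_swap he ((twoCliques p q).mem_edgeSet.mpr trivial),
          show (s(some (Sum.inl i), (none : Option (Fin p ⊕ Fin q)))) =
            s(none, some (Sum.inl i)) from Sym2.eq_swap, side_none_some]
        simpa using hubL i
      · have hij : i ≠ j := hadj
        rw [side_some_some]
        simpa using edgeL i j hij
      · exact hadj.elim
      · rw [c_congr (twoCliques p q) c Sym2.eq_swap he ((twoCliques p q).mem_edgeSet.mpr trivial),
          show (s(some (Sum.inr i), (none : Option (Fin p ⊕ Fin q)))) =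
            s(none, some (Sum.inr i)) from Sym2.eq_swap, side_none_some]
        simpa using hubR i
      · exact hadj.elim
      · have hij : i ≠ j := hadj
        rw [side_some_some]
        simpa using edgeR i j hij
  obtain ⟨⟨e, he⟩, hce⟩ := hc.1 (!bL)
  have hsplit := (heq e he).symm.trans hce
  have hbr : bR = !bL := by
    rcases h : inFirstClique p q e with _ | _ <;> rw [h] at hsplit <;> simp at hsplit
    exact hsplit
  refine ⟨bL, fun e he => ?_⟩
  rw [heq e he, hbr]

end TwoCliques

end NAC

open NAC in
/-- If `G` consists of two complete graphs `K_p`, `K_q` (`p, q ≥ 3`) glued along a single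
vertex, then `nac(G) = 1`, and the only two NAC-colourings are: one clique entirely red
and the other entirely blue, and its colour swap. -/
theorem statement19 (p q : ℕ) (hp : 3 ≤ p) (hq : 3 ≤ q) :
    nacNum (twoCliques (p - 1) (q - 1)) = 1 ∧
    ∀ c : (twoCliques (p - 1) (q - 1)).edgeSet → Bool,
      IsNAC (twoCliques (p - 1) (q - 1)) c ↔
        ((∀ e : (twoCliques (p - 1) (q - 1)).edgeSet,
            c e = inFirstClique (p - 1) (q - 1) (e : Sym2 _)) ∨
         (∀ e : (twoCliques (p - 1) (q - 1)).edgeSet,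
            c e = !inFirstClique (p - 1) (q - 1) (e : Sym2 _))) := by
  have hP : 0 < p - 1 := by omega
  have hQ : 0 < q - 1 := by omega
  have hiff : ∀ c : (twoCliques (p - 1) (q - 1)).edgeSet → Bool,
      IsNAC (twoCliques (p - 1) (q - 1)) c ↔
        ((∀ e : (twoCliques (p - 1) (q - 1)).edgeSet,
            c e = inFirstClique (p - 1) (q - 1) (e : Sym2 _)) ∨
         (∀ e : (twoCliques (p - 1) (q - 1)).edgeSet,
            c e = !inFirstClique (p - 1) (q - 1) (e : Sym2 _))) := by
    intro c
    constructor
    · intro hc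
      obtain ⟨t, ht⟩ := side_char hP hQ c hc
      cases t
      · right
        rintro ⟨e, he⟩
        rw [ht e he]
        cases h : inFirstClique (p - 1) (q - 1) e <;> simp [h]
      · left
        rintro ⟨e, he⟩
        rw [ht e he]
        cases h : inFirstClique (p - 1) (q - 1) e <;> simp [h]
    · rintro (h | h)
      · refine isNAC_of_side hP hQ c true (fun e he => ?_)
        rw [h ⟨e, he⟩]
        cases hs : inFirstClique (p - 1) (q - 1) e <;> simp [hs]
      · refine isNAC_of_side hP hQ c false (fun e he => ?_)
        rw [h ⟨e, he⟩]
        cases hs : inFirstClique (p - 1) (q - 1) e <;> simp [hs]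
  refine ⟨?_, hiff⟩
  have hset : {c : (twoCliques (p - 1) (q - 1)).edgeSet → Bool |
      IsNAC (twoCliques (p - 1) (q - 1)) c} =
      {(fun e : (twoCliques (p - 1) (q - 1)).edgeSet =>
          inFirstClique (p - 1) (q - 1) (e : Sym2 _)),
       (fun e : (twoCliques (p - 1) (q - 1)).edgeSet =>
          !inFirstClique (p - 1) (q - 1) (e : Sym2 _))} := by
    ext c
    simp only [Set.mem_setOf_eq, Set.mem_insert_iff, Set.mem_singleton_iff, hiff c]
    exact or_congr funext_iff.symm funext_iff.symm
  have hne : (fun e : (twoCliques (p - 1) (q - 1)).edgeSet =>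
        inFirstClique (p - 1) (q - 1) (e : Sym2 _)) ≠
      (fun e : (twoCliques (p - 1) (q - 1)).edgeSet => !inFirstClique (p - 1) (q - 1) (e : Sym2 _)) := by
    intro h
    have := congrFun h ⟨s(none, some (Sum.inl ⟨0, hP⟩)),
      (twoCliques (p - 1) (q - 1)).mem_edgeSet.mpr trivial⟩
    rw [side_none_some] at this
    simp at this
  unfold nacNum
  rw [hset, Set.ncard_pair hne]
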